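/- If the maximal operator N^k defined by N^k[f](L) = sup_{x∈ℝ^d} ∫_{x+L} f(y) dy (for f supported in the unit ball) is bounded from L^p(ℝ^d) to L^1(G(d,k)) for some p < ∞, then every (d,k) set has positive Lebesgue measure. -/

import Mathlib

open MeasureTheory Metric ENNReal NNReal

noncomputable section

/-- `ℝ^d`. -/
abbrev Euc (d : ℕ) : Type := EuclideanSpace ℝ (Fin d)

instance (d : ℕ) : MeasurableSpace (Submodule ℝ (Euc d)) := ⊤

/-- `γ` is the invariant probability measure on the Grassmannian `G(n,k)`. -/
def IsGrassMeasure (n k : ℕ) (γ : Measure (Submodule ℝ (Euc n))) : Prop :=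
  IsProbabilityMeasure γ ∧ γ {L | Module.finrank ℝ L ≠ k} = 0 ∧
    ∀ ρ : Euc n ≃ₗᵢ[ℝ] Euc n, ∀ S : Set (Submodule ℝ (Euc n)),
      γ ((fun L => Submodule.map (ρ.toLinearEquiv : Euc n →ₗ[ℝ] Euc n) L) ⁻¹' S) = γ S

/-- The `k`-plane maximal operator `N^k[f](L) = sup_x ∫_{x+L} |f|`, where the integral
is with respect to `k`-dimensional (Hausdorff) measure on the affine plane `x + L`. -/
def planeMax {n : ℕ} (k : ℕ) (L : Submodule ℝ (Euc n)) (f : Euc n → ℝ) : ℝ≥0∞ :=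
  ⨆ x : Euc n, ∫⁻ y in {z | z - x ∈ L}, (‖f y‖₊ : ℝ≥0∞) ∂ μH[(k : ℝ)]

lemma hausdorff_ball_pos (k : ℕ) (hk : 1 ≤ k) :
    0 < μH[(k : ℝ)] (Metric.closedBall (0 : EuclideanSpace ℝ (Fin k)) (1/2)) := by
  have hk0 : (0:ℝ) < k := by exact_mod_cast hk
  set s : Set (EuclideanSpace ℝ (Fin k)) := Metric.closedBall 0 (1/2) with hs
  set g : EuclideanSpace ℝ (Fin k) → (Fin k → ℝ) := ⇑(WithLp.equiv 2 (Fin k → ℝ)) with hg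
  have hlip : LipschitzWith 1 g := PiLp.lipschitzWith_ofLp 2 _
  have h1 : μH[(k : ℝ)] (g '' s) ≤ μH[(k : ℝ)] s := by
    simpa using hlip.hausdorffMeasure_image_le (by positivity) s
  have h2 : (μH[(k : ℝ)] : Measure (Fin k → ℝ)) = volume := by
    have hcard : (Fintype.card (Fin k) : ℝ) = (k : ℝ) := by simp
    rw [← hcard]; exact hausdorffMeasure_pi_real
  have hbox : (Set.univ.pi fun _ : Fin k => Set.Icc (-(1/(2*(k:ℝ)))) (1/(2*k))) ⊆ g '' s := by
    intro x hx
    refine ⟨(WithLp.equiv 2 _).symm x, ?_, rfl⟩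
    simp only [hs, Metric.mem_closedBall, dist_zero_right]
    rw [EuclideanSpace.norm_eq]
    have hsum : ∑ i, ‖(WithLp.equiv 2 (Fin k → ℝ)).symm x i‖ ^ 2 ≤ k * (1/(2*k))^2 := by
      calc ∑ i, ‖(WithLp.equiv 2 (Fin k → ℝ)).symm x i‖ ^ 2
          ≤ ∑ _i : Fin k, (1/(2*(k:ℝ)))^2 := by
            apply Finset.sum_le_sum; intro i _
            have := hx i (Set.mem_univ i)
            have h1 : |x i| ≤ 1/(2*(k:ℝ)) := abs_le.mpr ⟨this.1, this.2⟩
            have hxi : (WithLp.equiv 2 (Fin k → ℝ)).symm x i = x i := rfl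
            rw [Real.norm_eq_abs, sq_abs, hxi, ← sq_abs]
            exact pow_le_pow_left₀ (abs_nonneg _) h1 2
        _ = k * (1/(2*k))^2 := by simp [mul_comm]
    have hfin : (k:ℝ) * (1/(2*k))^2 ≤ (1/2)^2 := by
      have : (k:ℝ) * (1/(2*k))^2 = (1/2)^2 * (1/k) := by field_simp
      rw [this]
      have h3 : (1:ℝ)/k ≤ 1 := by rw [div_le_one hk0]; exact_mod_cast hk
      nlinarith
    have := Real.sqrt_le_sqrt (hsum.trans hfin)
    refine this.trans ?_
    rw [Real.sqrt_sq (by norm_num : (0:ℝ) ≤ 1/2)]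
  have hvol : 0 < volume (Set.univ.pi fun _ : Fin k => Set.Icc (-(1/(2*(k:ℝ)))) (1/(2*k))) := by
    rw [volume_pi_pi, Finset.prod_const]
    apply ENNReal.pow_pos
    rw [Real.volume_Icc]
    apply ENNReal.ofReal_pos.mpr
    nlinarith [one_div_pos.mpr (show (0:ℝ) < 2*k by positivity)]
  calc (0:ℝ≥0∞) < volume (Set.univ.pi fun _ : Fin k => Set.Icc (-(1/(2*(k:ℝ)))) (1/(2*k))) := hvol
    _ ≤ volume (g '' s) := measure_mono hbox
    _ = μH[(k : ℝ)] (g '' s) := by rw [h2]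
    _ ≤ μH[(k : ℝ)] s := h1

/-- If `N^k` is bounded from `L^p(ℝ^d)` to `L^1(G(d,k))` for some `p < ∞` (for `f`
supported in the unit ball), then every `(d,k)` set has positive Lebesgue measure. -/
theorem planeMax_bound_implies_positive_measure (d k : ℕ) (hk : 1 ≤ k) (hkd : k < d)
    (p : ℝ) (hp : 1 ≤ p)
    (γ : Measure (Submodule ℝ (Euc d))) (hγ : IsGrassMeasure d k γ)
    (C : ℝ≥0)
    (hbound : ∀ f : Euc d → ℝ, Measurable f →
      Function.support f ⊆ Metric.closedBall (0 : Euc d) 1 →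
      (∫⁻ L, planeMax k L f ∂ γ) ≤ C * eLpNorm f (ENNReal.ofReal p) volume)
    (E : Set (Euc d)) (hE : MeasurableSet E)
    (hplanes : ∀ L : Submodule ℝ (Euc d), Module.finrank ℝ L = k →
      ∃ x : Euc d, (fun v => x + v) '' (L : Set (Euc d)) ⊆ E) :
    0 < volume E := by
  by_contra hpos
  rw [not_lt, le_zero_iff] at hpos
  obtain ⟨hprob, hrank, -⟩ := hγ
  haveI := hprob
  obtain ⟨u, hu⟩ := TopologicalSpace.exists_dense_seq (Euc d)
  set S : ℕ → Set (Euc d) := fun n => {z | z + u n ∈ E} ∩ closedBall 0 1 with hSdef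
  set f : ℕ → Euc d → ℝ := fun n => Set.indicator (S n) 1 with hfdef
  have hSm : ∀ n, MeasurableSet (S n) :=
    fun n => ((measurable_add_const (u n)) hE).inter measurableSet_closedBall
  have hfm : ∀ n, Measurable (f n) := fun n => measurable_const.indicator (hSm n)
  have hsupp : ∀ n, Function.support (f n) ⊆ closedBall (0:Euc d) 1 := fun n =>
    (Set.support_indicator_subset).trans Set.inter_subset_right
  have hS0 : ∀ n, volume (S n) = 0 := by
    intro n
    refine measure_mono_null Set.inter_subset_left ?_
    rw [show {z : Euc d | z + u n ∈ E} = (fun h => h + u n) ⁻¹' E from rfl,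
      measure_preimage_add_right]
    exact hpos
  have hnorm : ∀ n, eLpNorm (f n) (ENNReal.ofReal p) volume = 0 := by
    intro n
    have hae0 : f n =ᵐ[volume] 0 := by
      rw [Filter.EventuallyEq, ae_iff]
      refine measure_mono_null ?_ (hS0 n)
      intro y hy
      by_contra hyS
      exact hy (Set.indicator_of_notMem hyS _)
    rw [eLpNorm_congr_ae hae0, eLpNorm_zero]
  have hint : ∀ n, ∫⁻ L, planeMax k L (f n) ∂γ = 0 := fun n =>
    le_antisymm (by simpa [hnorm n] using hbound (f n) (hfm n) (hsupp n)) zero_le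
  have hae : ∀ᵐ L ∂γ, ∀ n, planeMax k L (f n) = 0 :=
    ae_all_iff.mpr fun n => (lintegral_eq_zero_iff measurable_from_top).mp (hint n)
  have haerk : ∀ᵐ (L : Submodule ℝ (Euc d)) ∂γ, Module.finrank ℝ L = k := by
    rw [ae_iff]; exact hrank
  haveI : (ae γ).NeBot := ae_neBot.mpr (IsProbabilityMeasure.ne_zero γ)
  obtain ⟨L, hLrk, hall⟩ := (haerk.and hae).exists
  obtain ⟨x, hx⟩ := hplanes L hLrk
  obtain ⟨n, hn⟩ := hu.exists_dist_lt x (by norm_num : (0:ℝ) < 1/2)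
  -- the isometric embedding of Euc k onto L
  haveI : FiniteDimensional ℝ L := inferInstance
  set b : OrthonormalBasis (Fin k) ℝ L :=
    (stdOrthonormalBasis ℝ L).reindex (finCongr hLrk) with hb
  set e : Euc k →ₗᵢ[ℝ] Euc d := L.subtypeₗᵢ.comp b.repr.symm.toLinearIsometry with he
  have he_mem : ∀ v, e v ∈ L := fun v => (b.repr.symm v).2
  set x' : Euc d := x - u n with hx'
  set T : Set (Euc d) := (fun y => x' + y) '' (e '' closedBall 0 (1/2)) with hT
  have hTP : T ⊆ {z | z - x' ∈ L} := by
    rintro - ⟨-, ⟨v, -, rfl⟩, rfl⟩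
    simp only [Set.mem_setOf_eq, add_sub_cancel_left]
    exact he_mem v
  have hTmeas : MeasurableSet T := by
    have : IsCompact T :=
      (((isCompact_closedBall _ _).image e.continuous).image (continuous_const.add continuous_id))
    exact this.isClosed.measurableSet
  have hT1 : ∀ y ∈ T, f n y = 1 := by
    rintro - ⟨-, ⟨v, hv, rfl⟩, rfl⟩
    apply Set.indicator_of_mem
    constructor
    · show x' + e v + u n ∈ E
      have : x' + e v + u n = x + e v := by rw [hx']; abel
      rw [this]
      exact hx ⟨e v, he_mem v, rfl⟩
    · rw [mem_closedBall, dist_zero_right]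
      have h1 : ‖x'‖ < 1/2 := by rw [hx', ← dist_eq_norm]; exact hn
      have h2 : ‖e v‖ ≤ 1/2 := by
        rw [e.norm_map]
        rwa [mem_closedBall, dist_zero_right] at hv
      calc ‖x' + e v‖ ≤ ‖x'‖ + ‖e v‖ := norm_add_le _ _
        _ ≤ 1/2 + 1/2 := by linarith
        _ = 1 := by norm_num
  have hTpos : 0 < μH[(k : ℝ)] T := by
    have h1 : μH[(k : ℝ)] T = μH[(k : ℝ)] (e '' closedBall 0 (1/2)) := by
      have heq : T = (IsometryEquiv.addLeft x') '' (e '' closedBall 0 (1/2)) := by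
        rw [hT]; rfl
      rw [heq, IsometryEquiv.hausdorffMeasure_image]
    have h2 : μH[(k : ℝ)] (e '' closedBall 0 (1/2))
        = μH[(k : ℝ)] (closedBall (0 : Euc k) (1/2)) :=
      e.isometry.hausdorffMeasure_image (Or.inl (by positivity)) _
    rw [h1, h2]
    exact hausdorff_ball_pos k hk
  have hlow : μH[(k : ℝ)] T ≤ ∫⁻ y in {z | z - x' ∈ L}, (‖f n y‖₊ : ℝ≥0∞) ∂ μH[(k : ℝ)] := by
    calc μH[(k : ℝ)] T = (μH[(k : ℝ)].restrict {z | z - x' ∈ L}) T := by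
          rw [Measure.restrict_apply hTmeas, Set.inter_eq_self_of_subset_left hTP]
      _ = ∫⁻ y in {z | z - x' ∈ L}, T.indicator (fun _ => (1:ℝ≥0∞)) y ∂ μH[(k : ℝ)] := by
          rw [lintegral_indicator hTmeas, setLIntegral_one]
      _ ≤ _ := by
          apply lintegral_mono
          intro y
          by_cases hy : y ∈ T
          · simp [Set.indicator_of_mem hy, hT1 y hy]
          · simp [Set.indicator_of_notMem hy]
  have hfinal : (0:ℝ≥0∞) < planeMax k L (f n) := by
    refine lt_of_lt_of_le hTpos (hlow.trans ?_)
    exact le_iSup (fun x : Euc d => ∫⁻ y in {z | z - x ∈ L}, (‖f n y‖₊ : ℝ≥0∞) ∂ μH[(k : ℝ)]) x'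
  rw [hall n] at hfinal
  exact hfinal.false
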